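/- Assume furthermore E⁰_0 = 1, and let C : X⁺ → R be any function such that (i) C_λ = E¹_λ for every λ ∈ X⁺_red, and (ii) C satisfies the Steinberg tensor product identity C_λ = C_{λ⁰} · F(C_{λ¹}) · F²(C_{λ²}) ⋯ for every λ ∈ X⁺ (a product in which all but finitely many factors equal 1). Then C_λ = E^∞_λ for every λ ∈ X⁺. (In the paper, with p ≥ c_G, C_λ = [V_λ] is the formal character of the irreducible rational representation of highest weight λ, and this is the reformulated character formula [V_λ] = E^∞_λ.) -/

import Mathlib

/-!
Setting: `X⁺ = I → ℕ` (componentwise addition) for a finite index set `I`, `p ≥ 2`.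
`digit p lam k` is the `k`-th base-`p` digit `λ^k` of `lam` (so `λ^k ∈ X⁺_red` and
`lam = ∑_k p^k • λ^k`); `shift p k lam = ∑_{j≥k} p^{j-k} λ^j`;
`trunc p k lam = ∑_{0≤j≤k-1} p^j λ^j`.
-/

namespace LusztigChar

variable {I : Type*} [Fintype I] {R : Type*} [CommRing R]

/-- The `k`-th digit `λ^k` of `λ ∈ X⁺ = I → ℕ` in base `p`. -/
def digit (p : ℕ) (lam : I → ℕ) (k : ℕ) : I → ℕ := fun i => lam i / p ^ k % p

/-- `∑_{j≥k} p^{j-k} λ^j ∈ X⁺` (a sum with finitely many nonzero terms). -/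
noncomputable def shift (p k : ℕ) (lam : I → ℕ) : I → ℕ :=
  ∑ᶠ j : ℕ, p ^ j • digit p lam (k + j)

/-- `∑_{0≤j≤k-1} p^j λ^j ∈ X⁺`. -/
def trunc (p k : ℕ) (lam : I → ℕ) : I → ℕ :=
  ∑ j ∈ Finset.range k, p ^ j • digit p lam j

/-- The recursive family `E^k : X⁺ → R` built from `E⁰ = E0` and the integers
`p_{μ,λ} = P μ λ`:  `E^k_λ = ∑_μ p_{μ, ∑_{j≥k-1} p^{j-k+1} λ^j} · E^{k-1}_{∑_{0≤j≤k-2} p^j λ^j + p^{k-1} μ}`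
for `k ≥ 1`. -/
noncomputable def E (p : ℕ) (P : (I → ℕ) → (I → ℕ) → ℤ) (E0 : (I → ℕ) → R) :
    ℕ → (I → ℕ) → R
  | 0 => E0
  | k + 1 => fun lam =>
      ∑ᶠ mu : I → ℕ, P mu (shift p k lam) • E p P E0 k (trunc p k lam + p ^ k • mu)

lemma aux_mod_mul (a b x : ℕ) : x % (a * b) = a * (x / a % b) + x % a := by
  conv_lhs => rw [← Nat.div_add_mod (x % (a * b)) a]
  rw [Nat.mod_mul_right_div_self, Nat.mod_mod_of_dvd _ ⟨b, rfl⟩]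

lemma sum_digits (p : ℕ) (n k : ℕ) :
    ∑ j ∈ Finset.range k, p ^ j * (n / p ^ j % p) = n % p ^ k := by
  induction k with
  | zero => simp [Nat.mod_one]
  | succ k ih =>
      rw [Finset.sum_range_succ, ih, pow_succ, aux_mod_mul (p ^ k) p n]
      omega

lemma trunc_apply (p : ℕ) (lam : I → ℕ) (k : ℕ) (i : I) :
    trunc p k lam i = lam i % p ^ k := by
  rw [trunc, Finset.sum_apply]
  simpa [digit, smul_eq_mul] using sum_digits p (lam i) k

lemma shift_apply (p : ℕ) (hp : 2 ≤ p) (lam : I → ℕ) (k : ℕ) (i : I) :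
    shift p k lam i = lam i / p ^ k := by
  classical
  set L : ℕ := ∑ i, lam i with hL
  have hlamL : ∀ i, lam i ≤ L := fun i =>
    Finset.single_le_sum (fun _ _ => Nat.zero_le _) (Finset.mem_univ i)
  have hLp : L < p ^ L := Nat.lt_pow_self (by omega)
  have hsupp : Function.support (fun j => p ^ j • digit p lam (k + j)) ⊆ ↑(Finset.range L) := by
    intro j hj
    simp only [Finset.coe_range, Set.mem_Iio]
    by_contra h
    push_neg at h
    apply hj
    have hz : ∀ i', digit p lam (k + j) i' = 0 := by
      intro i'
      have : lam i' < p ^ (k + j) := by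
        calc lam i' ≤ L := hlamL i'
        _ < p ^ L := hLp
        _ ≤ p ^ (k + j) := Nat.pow_le_pow_right (by omega) (by omega)
      simp [digit, Nat.div_eq_of_lt this]
    funext i'
    simp [hz i']
  rw [shift, finsum_eq_sum_of_support_subset _ hsupp, Finset.sum_apply]
  have hterm : ∀ j, (p ^ j • digit p lam (k + j)) i = p ^ j * (lam i / p ^ k / p ^ j % p) := by
    intro j
    simp [digit, smul_eq_mul, Nat.div_div_eq_div_mul, ← pow_add]
  simp only [hterm]
  rw [sum_digits p (lam i / p ^ k) L]
  exact Nat.mod_eq_of_lt (lt_of_le_of_lt (le_trans (Nat.div_le_self _ _) (hlamL i)) hLp)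

lemma apply_le_N (N : (I → ℕ) →+ ℕ) (hN_zero : ∀ a, N a = 0 → a = 0) (mu : I → ℕ) (i : I) :
    mu i ≤ N mu := by
  classical
  have h1 : 1 ≤ N (Pi.single i 1) := by
    rcases Nat.eq_zero_or_pos (N (Pi.single i 1)) with h | h
    · have := congrFun (hN_zero _ h) i
      simp at this
    · exact h
  have hdecomp : mu = Pi.single i (mu i) + Function.update mu i 0 := by
    funext j
    by_cases hj : j = i
    · subst hj; simp
    · simp [Pi.single_apply, hj, Function.update_apply]
  have hsingle : Pi.single i (mu i) = mu i • (Pi.single i 1 : I → ℕ) := by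
    funext j
    by_cases hj : j = i
    · subst hj; simp
    · simp [Pi.single_apply, hj]
  calc mu i = mu i * 1 := (mul_one _).symm
    _ ≤ mu i * N (Pi.single i 1) := Nat.mul_le_mul_left _ h1
    _ = N (Pi.single i (mu i)) := by rw [hsingle, map_nsmul, smul_eq_mul]
    _ ≤ N (Pi.single i (mu i)) + N (Function.update mu i 0) := Nat.le_add_right _ _
    _ = N mu := by rw [← map_add, ← hdecomp]

/-- paper 7(b): assume `E⁰_0 = 1` and the Steinberg-type identity, and let
`C : X⁺ → R` satisfy (i) `C_λ = E¹_λ` for `λ ∈ X⁺_red` and (ii) the Steinberg tensor product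
identity `C_λ = C_{λ⁰} · F(C_{λ¹}) · F²(C_{λ²}) ⋯`. Then `C_λ = E^∞_λ` for all `λ ∈ X⁺`. -/
theorem char_eq_Einf {I : Type*} [Fintype I] {R : Type*} [CommRing R]
    (p : ℕ) (hp : 2 ≤ p)
    (le : (I → ℕ) → (I → ℕ) → Prop)
    (hle_refl : ∀ a, le a a)
    (hle_antisymm : ∀ a b, le a b → le b a → a = b)
    (hle_trans : ∀ a b c, le a b → le b c → le a c)
    (N : (I → ℕ) →+ ℕ)
    (hN_zero : ∀ a, N a = 0 → a = 0)
    (hN_mono : ∀ a b, le a b → N a ≤ N b)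
    (P : (I → ℕ) → (I → ℕ) → ℤ)
    (hP_le : ∀ mu lam, P mu lam ≠ 0 → le mu lam)
    (hP_diag : ∀ lam, P lam lam = 1)
    (E0 : (I → ℕ) → R) (hE00 : E0 0 = 1)
    (Einf : (I → ℕ) → R)
    (hEinf : ∀ lam, ∃ n : ℕ, ∀ k, n ≤ k → E p P E0 k lam = Einf lam)
    (F : R →+* R)
    (hSteinberg : ∀ lam : I → ℕ,
      E p P E0 1 lam = E p P E0 1 (digit p lam 0) * F (E0 (shift p 1 lam)))
    (C : (I → ℕ) → R)
    (hC_red : ∀ lam : I → ℕ, (∀ i, lam i ≤ p - 1) → C lam = E p P E0 1 lam)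
    (hC_steinberg : ∀ lam : I → ℕ, C lam = ∏ᶠ h : ℕ, (⇑F)^[h] (C (digit p lam h))) :
    ∀ lam : I → ℕ, C lam = Einf lam := by
  classical
  -- finiteness of lower sets
  have hfin : ∀ ν : I → ℕ, {mu : I → ℕ | le mu ν}.Finite := by
    intro ν
    apply Set.Finite.subset (Set.Finite.pi (fun i : I => Set.finite_Iic (N ν)))
    intro mu hmu
    intro i _
    exact le_trans (apply_le_N N hN_zero mu i) (hN_mono _ _ hmu)
  -- unfolding the recursion as a finite sum
  have hE_succ : ∀ (k : ℕ) (lam : I → ℕ) (s : Finset (I → ℕ)),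
      ({mu : I → ℕ | le mu (shift p k lam)} ⊆ ↑s) →
      E p P E0 (k + 1) lam
        = ∑ mu ∈ s, P mu (shift p k lam) • E p P E0 k (trunc p k lam + p ^ k • mu) := by
    intro k lam s hs
    show (∑ᶠ mu : I → ℕ, P mu (shift p k lam) • E p P E0 k (trunc p k lam + p ^ k • mu)) = _
    apply finsum_eq_sum_of_support_subset
    intro mu hmu
    apply hs
    by_contra h
    apply hmu
    have : P mu (shift p k lam) = 0 := by
      by_contra hP
      exact h (hP_le _ _ hP)
    simp [this]
  -- E¹ as a finite sum
  have hE1 : ∀ (ν : I → ℕ) (s : Finset (I → ℕ)), ({mu : I → ℕ | le mu ν} ⊆ ↑s) →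
      E p P E0 1 ν = ∑ mu ∈ s, P mu ν • E0 mu := by
    intro ν s hs
    have h0 : shift p 0 ν = ν := by
      funext i
      rw [shift_apply p hp]
      simp
    have h1 : ∀ mu : I → ℕ, trunc p 0 ν + p ^ 0 • mu = mu := by
      intro mu
      funext i
      simp [trunc]
    rw [hE_succ 0 ν s (by rwa [h0])]
    simp only [h0, h1]
    rfl
  have hE1zero : E p P E0 1 (0 : I → ℕ) = 1 := by
    rw [hE1 0 {0}]
    · simp [hP_diag, hE00]
    · intro mu hmu
      have : N mu = 0 := Nat.le_zero.mp (by simpa using hN_mono _ _ hmu)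
      simp [hN_zero mu this]
  -- the key product formula
  have key : ∀ (k : ℕ) (lam : I → ℕ), E p P E0 (k + 1) lam =
      (∏ h ∈ Finset.range (k + 1), (⇑F)^[h] (E p P E0 1 (digit p lam h)))
        * (⇑F)^[k + 1] (E0 (shift p (k + 1) lam)) := by
    intro k
    induction k with
    | zero =>
        intro lam
        simpa using hSteinberg lam
    | succ k ih =>
        intro lam
        set ν := shift p (k + 1) lam with hν
        have hνi : ∀ i, ν i = lam i / p ^ (k + 1) := fun i => shift_apply p hp lam (k + 1) i
        set s := (hfin ν).toFinset with hs
        have hssub : {mu : I → ℕ | le mu ν} ⊆ ↑s := by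
          intro mu hmu; simpa [hs] using hmu
        rw [hE_succ (k + 1) lam s hssub]
        set Q : R := ∏ h ∈ Finset.range (k + 1), (⇑F)^[h] (E p P E0 1 (digit p lam h)) with hQ
        have hterm : ∀ mu : I → ℕ,
            E p P E0 (k + 1) (trunc p (k + 1) lam + p ^ (k + 1) • mu)
              = Q * (⇑F)^[k + 1] (E0 mu) := by
          intro mu
          set ν' : I → ℕ := trunc p (k + 1) lam + p ^ (k + 1) • mu with hν'
          have hν'i : ∀ i, ν' i = lam i % p ^ (k + 1) + p ^ (k + 1) * mu i := by
            intro i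
            simp [hν', trunc_apply p lam (k + 1) i, smul_eq_mul]
          have hdig : ∀ h, h < k + 1 → digit p ν' h = digit p lam h := by
            intro h hh
            funext i
            show ν' i / p ^ h % p = lam i / p ^ h % p
            rw [hν'i i]
            have hsplit : p ^ (k + 1) = p ^ h * p ^ (k + 1 - h) := by
              rw [← pow_add]; congr 1; omega
            have hd1 : (lam i % p ^ (k + 1) + p ^ (k + 1) * mu i) / p ^ h
                = lam i % p ^ (k + 1) / p ^ h + p ^ (k + 1 - h) * mu i := by
              rw [hsplit, mul_assoc, Nat.add_mul_div_left _ _ (Nat.pow_pos (by omega))]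
            rw [hd1]
            have hd2 : p ^ (k + 1 - h) * mu i = p * (p ^ (k - h) * mu i) := by
              rw [← mul_assoc, ← pow_succ']
              congr 2
              omega
            rw [hd2, Nat.add_mul_mod_self_left]
            rw [hsplit, Nat.mod_mul_right_div_self,
              Nat.mod_mod_of_dvd _ (dvd_pow_self p (by omega : k + 1 - h ≠ 0))]
          have hshift : shift p (k + 1) ν' = mu := by
            funext i
            rw [shift_apply p hp ν' (k + 1) i, hν'i i,
              Nat.add_mul_div_left _ _ (Nat.pow_pos (by omega)),
              Nat.div_eq_of_lt (Nat.mod_lt _ (Nat.pow_pos (by omega)))]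
            simp
          rw [ih ν', hshift, hQ]
          congr 1
          apply Finset.prod_congr rfl
          intro h hh
          rw [hdig h (Finset.mem_range.mp hh)]
        have hGcoe : ⇑(F ^ (k + 1)) = (⇑F)^[k + 1] := RingHom.coe_pow F (k + 1)
        calc ∑ mu ∈ s, P mu ν • E p P E0 (k + 1) (trunc p (k + 1) lam + p ^ (k + 1) • mu)
            = ∑ mu ∈ s, P mu ν • (Q * (F ^ (k + 1) : R →+* R) (E0 mu)) := by
              apply Finset.sum_congr rfl
              intro mu _
              rw [hterm mu, hGcoe]
          _ = Q * (F ^ (k + 1) : R →+* R) (∑ mu ∈ s, P mu ν • E0 mu) := by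
              rw [map_sum, Finset.mul_sum]
              apply Finset.sum_congr rfl
              intro mu _
              rw [map_zsmul, mul_smul_comm]
          _ = Q * (F ^ (k + 1) : R →+* R) (E p P E0 1 ν) := by
              rw [← hE1 ν s hssub]
          _ = Q * (F ^ (k + 1) : R →+* R)
                (E p P E0 1 (digit p ν 0) * F (E0 (shift p 1 ν))) := by
              rw [← hSteinberg ν]
          _ = _ := by
              have hd0 : digit p ν 0 = digit p lam (k + 1) := by
                funext i
                show ν i / p ^ 0 % p = lam i / p ^ (k + 1) % p
                rw [hνi i]; simp
              have hs1 : shift p 1 ν = shift p (k + 2) lam := by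
                funext i
                rw [shift_apply p hp ν 1 i, shift_apply p hp lam (k + 2) i, hνi i,
                  Nat.div_div_eq_div_mul, pow_one, ← pow_succ]
              rw [hd0, hs1, map_mul, hGcoe, Finset.prod_range_succ, ← hQ,
                ← Function.iterate_succ_apply F (k + 1), mul_assoc]
  -- conclusion
  intro lam
  obtain ⟨n, hn⟩ := hEinf lam
  set L : ℕ := ∑ i, lam i with hLdef
  set K : ℕ := max n L + 1 with hK
  have hlam_lt : ∀ i, lam i < p ^ K := by
    intro i
    have h1 : lam i ≤ L :=
      Finset.single_le_sum (fun _ _ => Nat.zero_le _) (Finset.mem_univ i)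
    have h2 : K < p ^ K := Nat.lt_pow_self (by omega)
    omega
  have hdig0 : ∀ h, K ≤ h → digit p lam h = 0 := by
    intro h hh
    funext i
    have : lam i < p ^ h := lt_of_lt_of_le (hlam_lt i) (Nat.pow_le_pow_right (by omega) hh)
    simp [digit, Nat.div_eq_of_lt this]
  have hshift0 : shift p K lam = 0 := by
    funext i
    rw [shift_apply p hp lam K i, Nat.div_eq_of_lt (hlam_lt i)]
    rfl
  have hF1 : ∀ m : ℕ, (⇑F)^[m] (1 : R) = 1 := by
    intro m
    rw [← RingHom.coe_pow]
    exact map_one _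
  have hC0 : C (0 : I → ℕ) = 1 := by
    rw [hC_red 0 (fun i => by simp), hE1zero]
  -- compute E at level K
  obtain ⟨k, hk⟩ : ∃ k, K = k + 1 := ⟨max n L, rfl⟩
  have hEK : E p P E0 K lam
      = ∏ h ∈ Finset.range K, (⇑F)^[h] (E p P E0 1 (digit p lam h)) := by
    rw [hk, key k lam, ← hk, hshift0]
    rw [hE00, hF1, mul_one]
  -- compute C lam
  have hCsupp : Function.mulSupport (fun h : ℕ => (⇑F)^[h] (C (digit p lam h)))
      ⊆ ↑(Finset.range K) := by
    intro h hh
    simp only [Finset.coe_range, Set.mem_Iio]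
    by_contra hcon
    push_neg at hcon
    apply hh
    show (⇑F)^[h] (C (digit p lam h)) = 1
    rw [hdig0 h hcon, hC0, hF1]
  have hClam : C lam = ∏ h ∈ Finset.range K, (⇑F)^[h] (E p P E0 1 (digit p lam h)) := by
    rw [hC_steinberg lam, finprod_eq_prod_of_mulSupport_subset _ hCsupp]
    apply Finset.prod_congr rfl
    intro h _
    rw [hC_red (digit p lam h) (fun i => Nat.le_sub_one_of_lt (Nat.mod_lt _ (by omega)))]
  rw [hClam, ← hEK]
  exact hn K (by omega)

end LusztigChar
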